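/- For every n ≥ 1, every k ≥ 2, every ℓ ≥ 1, every assignment g : Fin n → Fin ℓ of bidders to expertise groups, and every family of nonnegative valuations v_i that are weakly increasing with respect to the pointwise order on profiles and symmetric within expertise groups, there exists a mechanism (x, p) that is ex-post incentive compatible and ex-post individually rational and whose revenue k·(ℓ·(k·(k−1)/2)+1)-approximates the optimal welfare, i.e., for every signal profile s, ∑_i p_i(s) ≥ max_i v_i(s) / (k·(ℓ·(k(k−1)/2)+1)). -/

import Mathlib

open Finset

namespace GVRUB

variable {n k : ℕ}

lemma argmax_nonempty (hn : 1 ≤ n) (v : Fin n → (Fin n → Fin k) → ℝ) (s : Fin n → Fin k) :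
    (Finset.univ.filter fun i => ∀ j, v j s ≤ v i s).Nonempty := by
  obtain ⟨i, -, hi⟩ := Finset.exists_max_image Finset.univ (fun i => v i s)
    ⟨⟨0, hn⟩, Finset.mem_univ _⟩
  exact ⟨i, Finset.mem_filter.2 ⟨Finset.mem_univ _, fun j => hi j (Finset.mem_univ _)⟩⟩

/-- The (least-index) welfare-maximizing bidder at a signal profile. -/
noncomputable def AM (hn : 1 ≤ n) (v : Fin n → (Fin n → Fin k) → ℝ) (s : Fin n → Fin k) :
    Fin n :=
  (Finset.univ.filter fun i => ∀ j, v j s ≤ v i s).min' (argmax_nonempty hn v s)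

lemma AM_le (hn : 1 ≤ n) (v : Fin n → (Fin n → Fin k) → ℝ) (s : Fin n → Fin k) (j : Fin n) :
    v j s ≤ v (AM hn v s) s := by
  have h := Finset.min'_mem _ (argmax_nonempty hn v s)
  rw [Finset.mem_filter] at h
  exact h.2 j

lemma AM_congr (hn : 1 ≤ n) (v : Fin n → (Fin n → Fin k) → ℝ) {s₁ s₂ : Fin n → Fin k}
    (h : ∀ j, v j s₁ = v j s₂) : AM hn v s₁ = AM hn v s₂ := by
  have hfil : (Finset.univ.filter fun i => ∀ j, v j s₁ ≤ v i s₁)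
      = (Finset.univ.filter fun i => ∀ j, v j s₂ ≤ v i s₂) := by
    apply Finset.filter_congr
    intro i _
    simp only [h]
  apply le_antisymm
  · apply Finset.min'_le
    rw [hfil]
    exact Finset.min'_mem _ (argmax_nonempty hn v s₂)
  · apply Finset.min'_le
    rw [← hfil]
    exact Finset.min'_mem _ (argmax_nonempty hn v s₁)

/-- The set of signal values `t` such that bidder `i` would be the welfare-maximizing
bidder if its signal were `t`.  This depends on `s` only through `s₋ᵢ`. -/
noncomputable def Tset (hn : 1 ≤ n) (v : Fin n → (Fin n → Fin k) → ℝ)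
    (s : Fin n → Fin k) (i : Fin n) : Finset (Fin k) :=
  Finset.univ.filter fun t => AM hn v (Function.update s i t) = i

lemma Tset_update (hn : 1 ≤ n) (v : Fin n → (Fin n → Fin k) → ℝ)
    (s : Fin n → Fin k) (i : Fin n) (r : Fin k) :
    Tset hn v (Function.update s i r) i = Tset hn v s i := by
  unfold Tset
  apply Finset.filter_congr
  intro t _
  rw [Function.update_idem]

end GVRUB

open GVRUB

/-- For every `n ≥ 1`, `k ≥ 2`, `ℓ ≥ 1`, group assignment `g`, and every
family of nonnegative valuations that are weakly increasing (pointwise order) and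
symmetric within expertise groups, there exists an ex-post IC and ex-post IR mechanism
`(x, p)` whose revenue `k·(ℓ·(k(k-1)/2)+1)`-approximates the optimal welfare. -/
theorem general_valuations_revenue_upper_bound
    (n k ℓ : ℕ) (hn : 1 ≤ n) (hk : 2 ≤ k) (hℓ : 1 ≤ ℓ)
    (g : Fin n → Fin ℓ)
    (v : Fin n → (Fin n → Fin k) → ℝ)
    (hv_nonneg : ∀ i s, 0 ≤ v i s)
    (hv_mono : ∀ i, Monotone (v i))
    (hv_sym : ∀ (j : Fin n) (s : Fin n → Fin k) (π : Equiv.Perm (Fin n)),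
      g ∘ π = g → v j (s ∘ π) = v j s) :
    ∃ x p : (Fin n → Fin k) → Fin n → ℝ,
      (∀ s i, 0 ≤ x s i) ∧ (∀ s, ∑ i, x s i ≤ 1) ∧
      (∀ s i, 0 ≤ p s i) ∧
      (∀ (i : Fin n) (s : Fin n → Fin k) (t : Fin k),
        x s i * v i s - p s i ≥
          x (Function.update s i t) i * v i s - p (Function.update s i t) i) ∧
      (∀ (i : Fin n) (s : Fin n → Fin k), x s i * v i s - p s i ≥ 0) ∧
      (∀ s : Fin n → Fin k,
        ∑ i, p s i ≥
          Finset.univ.sup' ⟨⟨0, hn⟩, Finset.mem_univ _⟩ (fun i => v i s) /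
            ((k : ℝ) * ((ℓ : ℝ) * ((k : ℝ) * ((k : ℝ) - 1) / 2) + 1))) := by
  classical
  have hkR : (2 : ℝ) ≤ (k : ℝ) := by exact_mod_cast hk
  have hlR : (1 : ℝ) ≤ (ℓ : ℝ) := by exact_mod_cast hℓ
  -- the number of strictly ordered pairs of signal values
  set c2 : ℕ := (Finset.univ.filter fun q : Fin k × Fin k => q.2 < q.1).card with hc2
  have hswap : c2 = (Finset.univ.filter fun q : Fin k × Fin k => q.1 < q.2).card := by
    rw [hc2]
    apply Finset.card_equiv (Equiv.prodComm (Fin k) (Fin k))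
    intro q
    simp [Equiv.prodComm]
  have hcover : (Finset.univ.filter fun q : Fin k × Fin k => q.2 < q.1)
      ∪ (Finset.univ.filter fun q : Fin k × Fin k => q.1 < q.2)
      = Finset.univ.filter fun q : Fin k × Fin k => q.1 ≠ q.2 := by
    ext q
    simp only [Finset.mem_union, Finset.mem_filter, Finset.mem_univ, true_and]
    constructor
    · rintro (h | h)
      · exact ne_of_gt h
      · exact ne_of_lt h
    · intro h
      rcases lt_or_gt_of_ne h with h' | h'
      · exact Or.inr h'
      · exact Or.inl h'
  have hdisj : Disjoint (Finset.univ.filter fun q : Fin k × Fin k => q.2 < q.1)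
      (Finset.univ.filter fun q : Fin k × Fin k => q.1 < q.2) := by
    rw [Finset.disjoint_left]
    intro q hq1 hq2
    simp only [Finset.mem_filter, Finset.mem_univ, true_and] at hq1 hq2
    exact absurd hq2 (not_lt_of_gt hq1)
  have hne_card : (Finset.univ.filter fun q : Fin k × Fin k => q.1 ≠ q.2).card = k * k - k := by
    have hod : (Finset.univ.filter fun q : Fin k × Fin k => q.1 ≠ q.2)
        = (Finset.univ : Finset (Fin k)).offDiag := by
      ext q
      simp [Finset.mem_offDiag]
    rw [hod, Finset.offDiag_card]
    simp
  have h2c2 : 2 * c2 = k * k - k := by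
    have := Finset.card_union_of_disjoint hdisj
    rw [hcover, hne_card] at this
    omega
  have hc2R : (c2 : ℝ) = (k : ℝ) * ((k : ℝ) - 1) / 2 := by
    have hkk : k ≤ k * k := Nat.le_mul_of_pos_left k (by omega)
    have h1 : ((2 * c2 : ℕ) : ℝ) = ((k * k - k : ℕ) : ℝ) := by rw [h2c2]
    rw [Nat.cast_sub hkk] at h1
    push_cast at h1
    linarith
  set D : ℝ := (ℓ : ℝ) * ((k : ℝ) * ((k : ℝ) - 1) / 2) + 1 with hD
  have hDc : D = (ℓ : ℝ) * (c2 : ℝ) + 1 := by rw [hD, hc2R]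
  have hc2nonneg : (0 : ℝ) ≤ (c2 : ℝ) := Nat.cast_nonneg _
  have hDpos : 0 < D := by
    rw [hDc]
    nlinarith
  -- the mechanism
  set x : (Fin n → Fin k) → Fin n → ℝ :=
    fun s i => (∑ t ∈ Tset hn v s i, if t ≤ s i then (1 : ℝ) else 0) / D with hx
  set p : (Fin n → Fin k) → Fin n → ℝ :=
    fun s i => (∑ t ∈ Tset hn v s i, if t ≤ s i then v i (Function.update s i t) else 0) / D
    with hp
  -- pointwise comparisons with updated profiles
  have hupd_le : ∀ (s : Fin n → Fin k) (i : Fin n) (t : Fin k),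
      t ≤ s i → Function.update s i t ≤ s := by
    intro s i t ht
    refine Pi.le_def.mpr fun j => ?_
    rcases eq_or_ne j i with rfl | hj
    · simpa using ht
    · simp [Function.update_of_ne hj]
  have hupd_ge : ∀ (s : Fin n → Fin k) (i : Fin n) (t : Fin k),
      s i ≤ t → s ≤ Function.update s i t := by
    intro s i t ht
    refine Pi.le_def.mpr fun j => ?_
    rcases eq_or_ne j i with rfl | hj
    · simpa using ht
    · simp [Function.update_of_ne hj]
  -- key expression for the ex-post utility after (possibly deviating) report r
  have keyGen : ∀ (s : Fin n → Fin k) (i : Fin n) (r : Fin k),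
      x (Function.update s i r) i * v i s - p (Function.update s i r) i
        = (∑ t ∈ Tset hn v s i,
            if t ≤ r then v i s - v i (Function.update s i t) else 0) / D := by
    intro s i r
    simp only [hx, hp, Tset_update, Function.update_self, Function.update_idem]
    rw [div_mul_eq_mul_div, div_sub_div_same]
    congr 1
    rw [Finset.sum_mul, ← Finset.sum_sub_distrib]
    refine Finset.sum_congr rfl fun t _ => ?_
    split_ifs <;> ring
  have keySelf : ∀ (s : Fin n → Fin k) (i : Fin n),
      x s i * v i s - p s i
        = (∑ t ∈ Tset hn v s i,
            if t ≤ s i then v i s - v i (Function.update s i t) else 0) / D := by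
    intro s i
    have h := keyGen s i (s i)
    rwa [Function.update_eq_self] at h
  -- (1) nonnegative allocations
  have part1 : ∀ s i, 0 ≤ x s i := by
    intro s i
    simp only [hx]
    apply div_nonneg _ hDpos.le
    apply Finset.sum_nonneg
    intro t _
    split_ifs <;> norm_num
  -- (3) nonnegative payments
  have part3 : ∀ s i, 0 ≤ p s i := by
    intro s i
    simp only [hp]
    apply div_nonneg _ hDpos.le
    apply Finset.sum_nonneg
    intro t _
    split_ifs with h
    · exact hv_nonneg i _
    · exact le_rfl
  -- (2) feasibility : the counting argument
  have part2 : ∀ s, ∑ i, x s i ≤ 1 := by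
    intro s
    simp only [hx]
    rw [← Finset.sum_div, div_le_one hDpos]
    have hbool : ∀ i : Fin n, (∑ t ∈ Tset hn v s i, if t ≤ s i then (1 : ℝ) else 0)
        = (((Tset hn v s i).filter fun t => t ≤ s i).card : ℝ) := by
      intro i
      rw [Finset.sum_boole]
    rw [Finset.sum_congr rfl fun i _ => hbool i]
    rw [← Nat.cast_sum]
    -- counting: pairs (i, t) with `t ∈ Tset s i` and `t ≤ s i` number at most `ℓ * c2 + 1`
    have hcount : (∑ i, ((Tset hn v s i).filter fun t => t ≤ s i).card) ≤ ℓ * c2 + 1 := by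
      rw [← Finset.card_sigma]
      have hmain := Finset.card_le_card_of_injOn
        (f := fun q : (Σ _ : Fin n, Fin k) =>
          if q.2 = s q.1 then (none : Option (Fin ℓ × Fin k × Fin k))
          else some (g q.1, s q.1, q.2))
        (s := Finset.univ.sigma fun i => (Tset hn v s i).filter fun t => t ≤ s i)
        (t := insert none ((Finset.univ.filter
          fun q : Fin ℓ × Fin k × Fin k => q.2.2 < q.2.1).image some))
        ?maps ?inj
      · refine le_trans hmain (le_trans (Finset.card_insert_le _ _) ?_)
        have himg := Finset.card_image_le
          (s := Finset.univ.filter fun q : Fin ℓ × Fin k × Fin k => q.2.2 < q.2.1)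
          (f := some)
        have hsplit : (Finset.univ.filter fun q : Fin ℓ × Fin k × Fin k => q.2.2 < q.2.1)
            = Finset.univ ×ˢ (Finset.univ.filter fun q : Fin k × Fin k => q.2 < q.1) := by
          ext q
          simp [Finset.mem_product]
        have hfc : (Finset.univ.filter
            fun q : Fin ℓ × Fin k × Fin k => q.2.2 < q.2.1).card = ℓ * c2 := by
          rw [hsplit, Finset.card_product, Finset.card_univ, Fintype.card_fin, ← hc2]
        omega
      case maps =>
        rintro ⟨i, t⟩ hq
        simp only [Finset.mem_coe, Finset.mem_sigma, Finset.mem_univ, Finset.mem_filter, Tset, true_and] at hq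
        obtain ⟨hAM, hle⟩ := hq
        by_cases h : t = s i
        · simp [h]
        · simp only [if_neg h, Finset.mem_coe]
          refine Finset.mem_insert.2 (Or.inr (Finset.mem_image.2 ⟨(g i, s i, t), ?_, rfl⟩))
          simp only [Finset.mem_filter, Finset.mem_univ, true_and]
          exact lt_of_le_of_ne hle h
      case inj =>
        rintro ⟨i, t⟩ hq ⟨i', t'⟩ hq' heq
        simp only [Finset.coe_sigma, Set.mem_sigma_iff, Finset.mem_coe, Finset.mem_univ,
          Finset.mem_filter, Tset, true_and] at hq hq'
        obtain ⟨hAM, hle⟩ := hq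
        obtain ⟨hAM', hle'⟩ := hq'
        by_cases h1 : t = s i <;> by_cases h2 : t' = s i'
        · -- both map to `none`
          rw [h1, Function.update_eq_self] at hAM
          rw [h2, Function.update_eq_self] at hAM'
          have hii : i = i' := by rw [← hAM, ← hAM']
          subst hii
          have htt : t = t' := by rw [h1, h2]
          subst htt
          rfl
        · simp only [if_pos h1, if_neg h2] at heq
          exact absurd heq (by simp)
        · simp only [if_neg h1, if_pos h2] at heq
          exact absurd heq (by simp)
        · -- both map to `some`
          simp only [if_neg h1, if_neg h2, Option.some.injEq, Prod.mk.injEq] at heq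
          obtain ⟨hg, hs, ht⟩ := heq
          have hii : i = i' := by
            by_contra hne
            set π := Equiv.swap i i' with hπ
            have hgp : g ∘ ⇑π = g := by
              funext w
              by_cases hwi : w = i <;> by_cases hwi' : w = i' <;>
                simp [hπ, Equiv.swap_apply_def, hwi, hwi', hg]
            have hupd : Function.update s i' t' = (Function.update s i t) ∘ ⇑π := by
              funext w
              by_cases hwi : w = i
              · have hwni' : w ≠ i' := by rw [hwi]; exact hne
                rw [Function.update_apply, if_neg hwni']
                have hπw : π w = i' := by rw [hπ, hwi]; exact Equiv.swap_apply_left i i'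
                rw [Function.comp_apply, hπw, Function.update_apply,
                  if_neg (Ne.symm hne)]
                rw [hwi, hs]
              · by_cases hwi' : w = i'
                · rw [Function.update_apply, if_pos hwi']
                  have hπw : π w = i := by
                    rw [hπ, hwi']; exact Equiv.swap_apply_right i i'
                  rw [Function.comp_apply, hπw, Function.update_apply, if_pos rfl]
                  exact ht.symm
                · rw [Function.update_apply, if_neg hwi']
                  have hπw : π w = w := by
                    rw [hπ]; exact Equiv.swap_apply_of_ne_of_ne hwi hwi'
                  rw [Function.comp_apply, hπw, Function.update_apply, if_neg hwi]
            have hveq : ∀ j, v j (Function.update s i' t') = v j (Function.update s i t) := by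
              intro j
              rw [hupd]
              exact hv_sym j _ π hgp
            have : i' = i := by
              rw [← hAM', ← hAM, AM_congr hn v hveq]
            exact hne this.symm
          subst hii
          subst ht
          rfl
    calc ((∑ i, ((Tset hn v s i).filter fun t => t ≤ s i).card : ℕ) : ℝ)
        ≤ ((ℓ * c2 + 1 : ℕ) : ℝ) := by exact_mod_cast hcount
      _ = D := by rw [hDc]; push_cast; ring
  -- (4) ex-post incentive compatibility
  have part4 : ∀ (i : Fin n) (s : Fin n → Fin k) (t : Fin k),
      x s i * v i s - p s i ≥
        x (Function.update s i t) i * v i s - p (Function.update s i t) i := by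
    intro i s tdev
    rw [keySelf s i, keyGen s i tdev, ge_iff_le, div_le_div_iff_of_pos_right hDpos]
    refine Finset.sum_le_sum fun t _ => ?_
    by_cases h1 : t ≤ s i
    · have hmono : v i (Function.update s i t) ≤ v i s := hv_mono i (hupd_le s i t h1)
      by_cases h2 : t ≤ tdev <;> simp only [if_pos, if_neg, h1, h2, if_true, if_false] <;>
        linarith
    · have hsl : s i ≤ t := le_of_not_ge h1
      have hmono : v i s ≤ v i (Function.update s i t) := hv_mono i (hupd_ge s i t hsl)
      by_cases h2 : t ≤ tdev <;> simp only [if_pos, if_neg, h1, h2, if_true, if_false] <;>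
        linarith
  -- (5) ex-post individual rationality
  have part5 : ∀ (i : Fin n) (s : Fin n → Fin k), x s i * v i s - p s i ≥ 0 := by
    intro i s
    rw [keySelf s i, ge_iff_le]
    apply div_nonneg _ hDpos.le
    apply Finset.sum_nonneg
    intro t _
    split_ifs with h
    · have := hv_mono i (hupd_le s i t h)
      linarith
    · exact le_rfl
  -- (6) revenue guarantee
  have part6 : ∀ s : Fin n → Fin k,
      ∑ i, p s i ≥
        Finset.univ.sup' ⟨⟨0, hn⟩, Finset.mem_univ _⟩ (fun i => v i s) /
          ((k : ℝ) * D) := by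
    intro s
    set i0 := AM hn v s with hi0
    have hmax : ∀ j, v j s ≤ v i0 s := fun j => AM_le hn v s j
    have hsup_le : Finset.univ.sup' ⟨⟨0, hn⟩, Finset.mem_univ _⟩ (fun i => v i s) ≤ v i0 s :=
      Finset.sup'_le _ _ fun j _ => hmax j
    have hsup_nn : 0 ≤ Finset.univ.sup' ⟨⟨0, hn⟩, Finset.mem_univ _⟩ (fun i => v i s) :=
      le_trans (hv_nonneg ⟨0, hn⟩ s)
        (Finset.le_sup' (fun i => v i s) (Finset.mem_univ (⟨0, hn⟩ : Fin n)))
    have hmem : s i0 ∈ Tset hn v s i0 := by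
      rw [Tset, Finset.mem_filter]
      refine ⟨Finset.mem_univ _, ?_⟩
      rw [Function.update_eq_self]
    have hsingle : v i0 s ≤ ∑ t ∈ Tset hn v s i0,
        if t ≤ s i0 then v i0 (Function.update s i0 t) else 0 := by
      have h := Finset.single_le_sum
        (f := fun t => if t ≤ s i0 then v i0 (Function.update s i0 t) else 0)
        (fun t _ => by
          split_ifs with h
          · exact hv_nonneg i0 _
          · exact le_rfl) hmem
      simpa [Function.update_eq_self] using h
    have hpi0 : v i0 s / D ≤ p s i0 := by
      simp only [hp]
      exact (div_le_div_iff_of_pos_right hDpos).mpr hsingle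
    have hsum : p s i0 ≤ ∑ i, p s i :=
      Finset.single_le_sum (fun j _ => part3 s j) (Finset.mem_univ i0)
    rw [ge_iff_le]
    calc Finset.univ.sup' ⟨⟨0, hn⟩, Finset.mem_univ _⟩ (fun i => v i s) / ((k : ℝ) * D)
        ≤ Finset.univ.sup' ⟨⟨0, hn⟩, Finset.mem_univ _⟩ (fun i => v i s) / D :=
          div_le_div_of_nonneg_left hsup_nn hDpos (by nlinarith)
      _ ≤ v i0 s / D := (div_le_div_iff_of_pos_right hDpos).mpr hsup_le
      _ ≤ p s i0 := hpi0
      _ ≤ ∑ i, p s i := hsum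
  exact ⟨x, p, part1, part2, part3, part4, part5, part6⟩
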